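/- Let σ* > 0, let u*, v*, u ∈ ℝ^n be unit vectors, write λ = ⟨u, u*⟩ and d = √(1 − λ²), and let δ_1 ∈ (0, 1/20]. Let B ∈ ℝ^{n×n} satisfy ‖B − I‖ ≤ δ_1 (so B is invertible), let E ∈ ℝ^n satisfy ‖E‖ ≤ δ_1·d, and let y ∈ ℝ^n and e ≥ 0 satisfy ‖y‖ ≤ σ*·e. Assume λ − 2δ_1·d − 2e ≥ 1/2. Define v̂ = σ*·λ·v* − σ*·B^{-1}E + B^{-1}y. Then v̂ ≠ 0 and √(1 − ⟨v̂/‖v̂‖, v*⟩²) ≤ 5·(δ_1·d + e). -/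

import Mathlib

open Matrix RealInnerProductSpace

/-- Spectral norm (largest singular value) of a real matrix, as the operator
norm of the induced map between Euclidean spaces. -/
noncomputable def specNorm {n₁ n₂ : ℕ} (A : Matrix (Fin n₁) (Fin n₂) ℝ) : ℝ :=
  ‖LinearMap.toContinuousLinearMap (Matrix.toEuclideanLin A)‖

lemma eN_eq {n : ℕ} (x : Fin n → ℝ) :
    ‖(WithLp.equiv 2 (Fin n → ℝ)).symm x‖ = Real.sqrt (∑ i, (x i) ^ 2) := by
  rw [EuclideanSpace.norm_eq]
  simp [Real.norm_eq_abs, sq_abs]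

lemma eI_eq {n : ℕ} (x y : Fin n → ℝ) :
    ⟪(WithLp.equiv 2 (Fin n → ℝ)).symm x, (WithLp.equiv 2 (Fin n → ℝ)).symm y⟫
      = ∑ i, x i * y i := by
  simp [PiLp.inner_apply, mul_comm]

lemma specNorm_eq {n : ℕ} (A : Matrix (Fin n) (Fin n) ℝ) :
    specNorm A = ‖Matrix.toEuclideanCLM (n := Fin n) (𝕜 := ℝ) A‖ := rfl

lemma mulVec_norm_le {n : ℕ} (A : Matrix (Fin n) (Fin n) ℝ) (x : Fin n → ℝ) :
    ‖(WithLp.equiv 2 (Fin n → ℝ)).symm (A *ᵥ x)‖ ≤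
      specNorm A * ‖(WithLp.equiv 2 (Fin n → ℝ)).symm x‖ := by
  rw [specNorm_eq]
  have := (Matrix.toEuclideanCLM (n := Fin n) (𝕜 := ℝ) A).le_opNorm
    ((WithLp.equiv 2 (Fin n → ℝ)).symm x)
  rwa [WithLp.equiv_symm_apply, Matrix.toEuclideanCLM_toLp] at this

lemma isUnit_of_specNorm {n : ℕ} (B : Matrix (Fin n) (Fin n) ℝ)
    (h : specNorm (B - 1) < 1) : IsUnit B := by
  have h1 : IsUnit (Matrix.toEuclideanCLM (n := Fin n) (𝕜 := ℝ) B) := by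
    have hn : ‖-(Matrix.toEuclideanCLM (n := Fin n) (𝕜 := ℝ) (B - 1))‖ < 1 := by
      rwa [norm_neg, ← specNorm_eq]
    have h0 : IsUnit (1 - -(Matrix.toEuclideanCLM (n := Fin n) (𝕜 := ℝ) (B - 1))) :=
      (Units.oneSub _ hn).isUnit
    rw [sub_neg_eq_add] at h0
    have hB1 : B = 1 + (B - 1) := by abel
    rw [hB1, map_add, _root_.map_one]
    exact h0
  have h2 := h1.map (Matrix.toEuclideanCLM (n := Fin n) (𝕜 := ℝ)).symm.toRingEquiv.toRingHom
  simpa using h2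

set_option maxHeartbeats 1000000 in
theorem stmt12 {n : ℕ} (σstar : ℝ) (hσstar : 0 < σstar)
    (ustar vstar u : Fin n → ℝ)
    (hustar : ∑ i, (ustar i) ^ 2 = 1) (hvstar : ∑ i, (vstar i) ^ 2 = 1)
    (hu : ∑ i, (u i) ^ 2 = 1)
    (δ1 : ℝ) (hδ1 : δ1 ∈ Set.Ioc (0 : ℝ) (1 / 20))
    (B : Matrix (Fin n) (Fin n) ℝ) (hB : specNorm (B - 1) ≤ δ1)
    (E : Fin n → ℝ)
    (hE : Real.sqrt (∑ i, (E i) ^ 2) ≤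
      δ1 * Real.sqrt (1 - (∑ i, u i * ustar i) ^ 2))
    (y : Fin n → ℝ) (e : ℝ) (he : 0 ≤ e)
    (hy : Real.sqrt (∑ i, (y i) ^ 2) ≤ σstar * e)
    (hgap : 1 / 2 ≤ (∑ i, u i * ustar i)
      - 2 * δ1 * Real.sqrt (1 - (∑ i, u i * ustar i) ^ 2) - 2 * e)
    (vhat : Fin n → ℝ)
    (hvhat : vhat = fun i => σstar * (∑ k, u k * ustar k) * vstar i
      - σstar * (B⁻¹ *ᵥ E) i + (B⁻¹ *ᵥ y) i) :
    vhat ≠ 0 ∧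
      Real.sqrt (1 - ((∑ i, vhat i * vstar i) / Real.sqrt (∑ i, (vhat i) ^ 2)) ^ 2) ≤
        5 * (δ1 * Real.sqrt (1 - (∑ i, u i * ustar i) ^ 2) + e) := by
  obtain ⟨hδ0, hδle⟩ := hδ1
  set lam := ∑ i, u i * ustar i with hlam
  set d := Real.sqrt (1 - lam ^ 2) with hd
  have hd0 : 0 ≤ d := Real.sqrt_nonneg _
  set t := δ1 * d + e with ht
  have ht0 : 0 ≤ t := by positivity
  have hlam_ge : 1 / 2 + 2 * t ≤ lam := by rw [ht]; linarith
  -- invertibility of B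
  have hBu : IsUnit B := isUnit_of_specNorm B (lt_of_le_of_lt hB (by linarith))
  have hBdet : IsUnit B.det := (Matrix.isUnit_iff_isUnit_det B).mp hBu
  have hBB : B * B⁻¹ = 1 := Matrix.mul_nonsing_inv B hBdet
  have h1δ : (0:ℝ) < 1 - δ1 := by linarith
  set e2 : (Fin n → ℝ) → EuclideanSpace ℝ (Fin n) := ⇑(WithLp.equiv 2 (Fin n → ℝ)).symm with he2
  -- bound for B⁻¹ *ᵥ w
  have key : ∀ w : Fin n → ℝ, ‖e2 (B⁻¹ *ᵥ w)‖ * (1 - δ1) ≤ ‖e2 w‖ := by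
    intro w
    set a := B⁻¹ *ᵥ w with ha
    have hBa : B *ᵥ a = w := by
      rw [ha, Matrix.mulVec_mulVec, hBB, Matrix.one_mulVec]
    have haw : a = w - (B - 1) *ᵥ a := by
      rw [Matrix.sub_mulVec, Matrix.one_mulVec, hBa]
      abel
    have h1 : ‖e2 a‖ ≤ ‖e2 w‖ + δ1 * ‖e2 a‖ := by
      calc ‖e2 a‖ = ‖e2 (w - (B - 1) *ᵥ a)‖ := by rw [← haw]
        _ = ‖e2 w - e2 ((B - 1) *ᵥ a)‖ := by rw [he2]; simp
        _ ≤ ‖e2 w‖ + ‖e2 ((B - 1) *ᵥ a)‖ := norm_sub_le _ _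
        _ ≤ ‖e2 w‖ + δ1 * ‖e2 a‖ := by
            have h3 := mulVec_norm_le (B - 1) a
            have h2 : specNorm (B - 1) * ‖e2 a‖ ≤ δ1 * ‖e2 a‖ :=
              mul_le_mul_of_nonneg_right hB (norm_nonneg _)
            rw [← he2] at h3
            linarith
    nlinarith [norm_nonneg (e2 a)]
  have hEb : ‖e2 E‖ ≤ δ1 * d := by rw [he2, eN_eq]; exact hE
  have hyb : ‖e2 y‖ ≤ σstar * e := by rw [he2, eN_eq]; exact hy
  -- decomposition
  set vs := e2 vstar with hvs
  have hvs1 : ‖vs‖ = 1 := by rw [hvs, he2, eN_eq, hvstar, Real.sqrt_one]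
  set c := σstar * lam with hc
  set r : EuclideanSpace ℝ (Fin n) := (-σstar) • e2 (B⁻¹ *ᵥ E) + e2 (B⁻¹ *ᵥ y) with hr
  set V := e2 vhat with hV
  have hVdec : V = c • vs + r := by
    rw [hV, hr, hvs, he2, hvhat]
    ext i
    simp only [WithLp.equiv_symm_apply, WithLp.ofLp_toLp, PiLp.add_apply, PiLp.smul_apply, smul_eq_mul]
    ring
  -- bound on r
  have hrb : ‖r‖ ≤ 2 * σstar * t := by
    set nA := ‖e2 (B⁻¹ *ᵥ E)‖ with hnA
    set nY := ‖e2 (B⁻¹ *ᵥ y)‖ with hnY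
    have hnA0 : 0 ≤ nA := norm_nonneg _
    have hnY0 : 0 ≤ nY := norm_nonneg _
    have h1 : ‖r‖ ≤ σstar * nA + nY := by
      calc ‖r‖ ≤ ‖(-σstar) • e2 (B⁻¹ *ᵥ E)‖ + ‖e2 (B⁻¹ *ᵥ y)‖ := norm_add_le _ _
        _ = σstar * nA + nY := by
            rw [norm_smul, Real.norm_eq_abs, abs_neg, abs_of_pos hσstar]
    have hA1 : nA * (1 - δ1) ≤ δ1 * d := le_trans (key E) hEb
    have hY1 : nY * (1 - δ1) ≤ σstar * e := le_trans (key y) hyb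
    have hA2 : nA ≤ 2 * (δ1 * d) := by nlinarith [mul_le_mul_of_nonneg_left hδle hnA0]
    have hY2 : nY ≤ 2 * (σstar * e) := by nlinarith [mul_le_mul_of_nonneg_left hδle hnY0]
    have := mul_le_mul_of_nonneg_left hA2 hσstar.le
    rw [ht]
    nlinarith
  -- lower bound on ‖V‖
  have hVlow : σstar / 2 ≤ ‖V‖ := by
    have h1 : ‖c • vs‖ = c := by
      rw [norm_smul, hvs1, mul_one, Real.norm_eq_abs, abs_of_pos]
      rw [hc]
      nlinarith
    have h2 : c • vs = V - r := by rw [hVdec]; abel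
    have h3 : c ≤ ‖V‖ + ‖r‖ := by
      rw [← h1, h2]
      exact norm_sub_le _ _
    have h4 : σstar * (1 / 2 + 2 * t) ≤ σstar * lam :=
      mul_le_mul_of_nonneg_left hlam_ge hσstar.le
    rw [hc] at h3
    nlinarith
  have hVpos : 0 < ‖V‖ := lt_of_lt_of_le (by positivity) hVlow
  have hvne : vhat ≠ 0 := by
    intro h0
    rw [hV, he2, h0] at hVpos
    simp at hVpos
  refine ⟨hvne, ?_⟩
  -- rewrite the goal in terms of V, vs
  have hip : ∑ i, vhat i * vstar i = ⟪V, vs⟫ := by rw [hV, hvs, he2, eI_eq]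
  have hnv : Real.sqrt (∑ i, (vhat i) ^ 2) = ‖V‖ := by rw [hV, he2, eN_eq]
  rw [hip, hnv]
  -- geometry
  set ρ := ⟪r, vs⟫ with hρ
  have hwc : ⟪V, vs⟫ = c + ρ := by
    rw [hVdec, inner_add_left, real_inner_smul_left, real_inner_self_eq_norm_sq, hvs1]
    ring
  have hP : V - ⟪V, vs⟫ • vs = r - ρ • vs := by
    rw [hwc, hVdec, add_smul]
    abel
  have hsq1 : ‖V - ⟪V, vs⟫ • vs‖ ^ 2 = ‖V‖ ^ 2 - ⟪V, vs⟫ ^ 2 := by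
    rw [norm_sub_sq_real, real_inner_smul_right, norm_smul, hvs1, mul_one,
      Real.norm_eq_abs, sq_abs]
    ring
  have hsq2 : ‖r - ρ • vs‖ ^ 2 = ‖r‖ ^ 2 - ρ ^ 2 := by
    rw [norm_sub_sq_real, real_inner_smul_right, norm_smul, hvs1, mul_one,
      Real.norm_eq_abs, sq_abs, ← hρ]
    ring
  have h4 : ‖V‖ ^ 2 - ⟪V, vs⟫ ^ 2 ≤ ‖r‖ ^ 2 := by
    rw [← hsq1, hP, hsq2]
    nlinarith [sq_nonneg ρ]
  have hfrac : 1 - (⟪V, vs⟫ / ‖V‖) ^ 2 ≤ (‖r‖ / ‖V‖) ^ 2 := by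
    have heq : 1 - (⟪V, vs⟫ / ‖V‖) ^ 2 = (‖V‖ ^ 2 - ⟪V, vs⟫ ^ 2) / ‖V‖ ^ 2 := by
      field_simp
    rw [heq, div_pow]
    exact div_le_div_of_nonneg_right h4 (by positivity) |>.trans_eq rfl
  calc Real.sqrt (1 - (⟪V, vs⟫ / ‖V‖) ^ 2)
      ≤ Real.sqrt ((‖r‖ / ‖V‖) ^ 2) := Real.sqrt_le_sqrt hfrac
    _ = ‖r‖ / ‖V‖ := Real.sqrt_sq (by positivity)
    _ ≤ 5 * t := by
        rw [div_le_iff₀ hVpos]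
        nlinarith [mul_le_mul_of_nonneg_left hVlow (by positivity : (0:ℝ) ≤ 5 * t)]
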